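/- Let σ > 0, let μ₁, μ₂ ∈ ℝ, and let f_{μ}(x) = (1/(σ√(2π))) exp(−(x−μ)²/(2σ²)) denote the Gaussian density with mean μ and variance σ². Then for every real α, ∫_ℝ f_{μ₁}(x)^α · f_{μ₂}(x)^{1−α} dx = exp( α(α−1)(μ₁−μ₂)² / (2σ²) ). (Consequently, for α > 1 the α-Rényi divergence between N(μ₁, σ²) and N(μ₂, σ²) equals α(μ₁−μ₂)²/(2σ²), which is the key computation showing that the Gaussian mechanism with noise variance Δ²/(2ρ) for a sensitivity-Δ query satisfies ρ-zero-concentrated differential privacy.) -/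

import Mathlib

open MeasureTheory ProbabilityTheory Real

/-- The Rényi integral of two Gaussian densities with common variance `σ²`:
`∫ f_{μ₁}^α f_{μ₂}^{1−α} = exp(α(α−1)(μ₁−μ₂)²/(2σ²))`, the key computation behind the
zCDP guarantee of the Gaussian mechanism. -/
theorem gaussian_renyi_integral (σ : ℝ) (hσ : 0 < σ) (μ₁ μ₂ : ℝ) (α : ℝ) :
    ∫ x : ℝ, (gaussianPDFReal μ₁ ⟨σ ^ 2, sq_nonneg σ⟩ x) ^ α *
        (gaussianPDFReal μ₂ ⟨σ ^ 2, sq_nonneg σ⟩ x) ^ (1 - α) =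
      Real.exp (α * (α - 1) * (μ₁ - μ₂) ^ 2 / (2 * σ ^ 2)) := by
  set v : NNReal := ⟨σ ^ 2, sq_nonneg σ⟩ with hv
  have hvne : v ≠ 0 := by
    simp only [hv, ← NNReal.coe_ne_zero, NNReal.coe_mk]
    exact fun h => pow_ne_zero 2 hσ.ne' (congrArg NNReal.toReal h)
  have hvc : (v : ℝ) = σ ^ 2 := rfl
  have hc : (0 : ℝ) < (√(2 * π * v))⁻¹ := by
    rw [hvc]
    have : (0:ℝ) < 2 * π * σ ^ 2 := by positivity
    positivity
  have h2σ : (2 * σ ^ 2 : ℝ) ≠ 0 := by positivity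
  set m : ℝ := α * μ₁ + (1 - α) * μ₂ with hm
  have key : ∀ x : ℝ, (gaussianPDFReal μ₁ v x) ^ α * (gaussianPDFReal μ₂ v x) ^ (1 - α)
      = Real.exp (α * (α - 1) * (μ₁ - μ₂) ^ 2 / (2 * σ ^ 2)) * gaussianPDFReal m v x := by
    intro x
    unfold gaussianPDFReal
    rw [Real.mul_rpow hc.le (Real.exp_nonneg _), Real.mul_rpow hc.le (Real.exp_nonneg _),
      ← Real.exp_mul, ← Real.exp_mul]
    have hcc : (√(2 * π * v))⁻¹ ^ α * (√(2 * π * v))⁻¹ ^ (1 - α) = (√(2 * π * v))⁻¹ := by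
      rw [← Real.rpow_add hc]
      norm_num
    calc (√(2 * π * v))⁻¹ ^ α * Real.exp (-(x - μ₁) ^ 2 / (2 * v) * α) *
          ((√(2 * π * v))⁻¹ ^ (1 - α) * Real.exp (-(x - μ₂) ^ 2 / (2 * v) * (1 - α)))
        = ((√(2 * π * v))⁻¹ ^ α * (√(2 * π * v))⁻¹ ^ (1 - α)) *
          (Real.exp (-(x - μ₁) ^ 2 / (2 * v) * α) * Real.exp (-(x - μ₂) ^ 2 / (2 * v) * (1 - α))) := by
          ring
      _ = (√(2 * π * v))⁻¹ * Real.exp (-(x - μ₁) ^ 2 / (2 * v) * α + -(x - μ₂) ^ 2 / (2 * v) * (1 - α)) := by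
          rw [hcc, ← Real.exp_add]
      _ = Real.exp (α * (α - 1) * (μ₁ - μ₂) ^ 2 / (2 * σ ^ 2)) *
          ((√(2 * π * v))⁻¹ * Real.exp (-(x - m) ^ 2 / (2 * v))) := by
          rw [mul_left_comm, ← Real.exp_add]
          congr 2
          rw [hvc, hm]
          field_simp
          ring
  simp_rw [key]
  rw [integral_const_mul, integral_gaussianPDFReal_eq_one m hvne, mul_one]
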